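/- Let κ > δ > 0 and C > 0. Let V : [0,∞) → ℝ be differentiable and nonnegative, with V'(t) + 2κ V(t) ≤ C V(t)² for all t ≥ 0, and suppose V(0) < 2(κ - δ)/C. Then V(t) ≤ e^{-2δ t} V(0) for all t ≥ 0. -/

import Mathlib

open Real

/-- Local comparison lemma: if V ≥ 0 is differentiable on [0,∞) with
    V' + 2κV ≤ CV² and V(0) < 2(κ-δ)/C, then V(t) ≤ e^{-2δt} V(0). -/
theorem quadratic_comparison_lemma (κ δ C : ℝ) (hδ : 0 < δ) (hκ : δ < κ) (hC : 0 < C)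
    (V : ℝ → ℝ)
    (hdiff : ∀ t : ℝ, 0 ≤ t → DifferentiableAt ℝ V t)
    (hnonneg : ∀ t : ℝ, 0 ≤ t → 0 ≤ V t)
    (hineq : ∀ t : ℝ, 0 ≤ t → deriv V t + 2 * κ * V t ≤ C * V t ^ 2)
    (hinit : V 0 < 2 * (κ - δ) / C) :
    ∀ t : ℝ, 0 ≤ t → V t ≤ Real.exp (-2 * δ * t) * V 0 := by
  set B : ℝ := 2 * (κ - δ) / C with hBdef
  have hB : 0 < B := div_pos (by linarith) hC
  have hCB : C * B = 2 * (κ - δ) := by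
    rw [hBdef]; field_simp [hC.ne']
  -- key derivative bound while V ≤ B
  have key : ∀ t, 0 ≤ t → V t ≤ B → deriv V t ≤ -2 * δ * V t + 0 := by
    intro t ht hVB
    have h1 := hineq t ht
    have h0 := hnonneg t ht
    have h2 : C * V t ^ 2 ≤ 2 * (κ - δ) * V t := by
      have : C * V t ≤ 2 * (κ - δ) := by
        calc C * V t ≤ C * B := by nlinarith
          _ = 2 * (κ - δ) := hCB
      nlinarith
    nlinarith
  -- Gronwall on [0, b] provided V ≤ B on [0, b)
  have gron : ∀ b : ℝ, 0 ≤ b → (∀ t ∈ Set.Ico (0:ℝ) b, V t ≤ B) →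
      ∀ t ∈ Set.Icc (0:ℝ) b, V t ≤ V 0 * Real.exp (-2 * δ * t) := by
    intro b hb hVB t ht
    have hcont : ContinuousOn V (Set.Icc 0 b) := fun x hx =>
      (hdiff x hx.1).continuousAt.continuousWithinAt
    have := le_gronwallBound_of_liminf_deriv_right_le (f := V) (f' := deriv V)
      (δ := V 0) (K := -2 * δ) (ε := 0) (a := 0) (b := b) hcont
      (fun x hx r hr =>
        ((hdiff x hx.1).hasDerivAt.hasDerivWithinAt).liminf_right_slope_le hr)
      le_rfl
      (fun x hx => key x hx.1 (hVB x hx))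
      t ht
    simpa [gronwallBound_ε0] using this
  -- V stays ≤ B on [0, ∞)
  have stay : ∀ t : ℝ, 0 ≤ t → V t ≤ B := by
    by_contra h
    push_neg at h
    obtain ⟨b, hb, hVb⟩ := h
    set S : Set ℝ := Set.Icc 0 b ∩ V ⁻¹' Set.Ici B with hSdef
    have hScl : IsClosed S := by
      apply ContinuousOn.preimage_isClosed_of_isClosed
        (fun x hx => (hdiff x hx.1).continuousAt.continuousWithinAt)
        isClosed_Icc isClosed_Ici
    have hSne : S.Nonempty := ⟨b, ⟨⟨hb, le_refl b⟩, le_of_lt hVb⟩⟩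
    have hSbdd : BddBelow S := ⟨0, fun x hx => hx.1.1⟩
    set t₀ : ℝ := sInf S with ht₀def
    have ht₀S : t₀ ∈ S := hScl.csInf_mem hSne hSbdd
    have ht₀0 : 0 ≤ t₀ := ht₀S.1.1
    have hVt₀ : B ≤ V t₀ := ht₀S.2
    have hbelow : ∀ t ∈ Set.Ico (0:ℝ) t₀, V t ≤ B := by
      intro t ht
      by_contra hgt
      push_neg at hgt
      have : t ∈ S := ⟨⟨ht.1, le_trans ht.2.le ht₀S.1.2⟩, le_of_lt hgt⟩
      exact absurd (csInf_le hSbdd this) (not_le.mpr ht.2)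
    have := gron t₀ ht₀0 hbelow t₀ ⟨ht₀0, le_refl _⟩
    have hexp : Real.exp (-2 * δ * t₀) ≤ 1 := by
      apply Real.exp_le_one_iff.mpr
      nlinarith
    have hV0 : 0 ≤ V 0 := hnonneg 0 le_rfl
    nlinarith
  intro t ht
  have := gron t ht (fun s hs => stay s hs.1) t ⟨ht, le_refl _⟩
  linarith [this, (by ring : V 0 * Real.exp (-2 * δ * t) = Real.exp (-2 * δ * t) * V 0)]
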